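/- arXiv:2509.20921 — 2 statements merged into one kernel-verified Lean document; each statement's English description precedes it below -/
import Mathlib

section
/- The identity map of (ℝ²_≤ ∖ Δ) ∪ {Δ} is a homeomorphism from the metric topology induced by d_rk to the metric topology induced by d_dim; that is, the metrics d_rk and d_dim induce the same topology on the quotient (ℝ²_≤ ∖ Δ) ∪ {Δ}. -/
open scoped Classical ENNReal
open MeasureTheory Filter

noncomputable section

/-- Off-diagonal points of `ℝ²_≤`. -/
abbrev Pt : Type := {p : ℝ × ℝ // p.1 < p.2}

/-- The quotient `(ℝ²_≤ ∖ Δ) ∪ {Δ}`: the diagonal is collapsed to the single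
point `none`. -/
abbrev PtD : Type := Option Pt

/-- The rank "distance" formula on `ℝ²_≤`. -/
def drk (x y : ℝ × ℝ) : ℝ :=
  (x.2 - x.1) ^ 2 / 2 + (y.2 - y.1) ^ 2 / 2 - (max (min x.2 y.2 - max x.1 y.1) 0) ^ 2

/-- The dimension "distance" formula on `ℝ²_≤` (length of the symmetric
difference of the intervals `[x₁,x₂]` and `[y₁,y₂]`). -/
def ddim (x y : ℝ × ℝ) : ℝ :=
  (x.2 - x.1) + (y.2 - y.1) - 2 * max (min x.2 y.2 - max x.1 y.1) 0

/-- `d_rk` on the quotient `(ℝ²_≤ ∖ Δ) ∪ {Δ}`, with `d_rk(x,Δ) = ½(x₂−x₁)²`. -/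
def drkQ : PtD → PtD → ℝ
  | Option.some x, Option.some y => drk x.1 y.1
  | Option.some x, Option.none => (x.1.2 - x.1.1) ^ 2 / 2
  | Option.none, Option.some y => (y.1.2 - y.1.1) ^ 2 / 2
  | Option.none, Option.none => 0

/-- `d_dim` on the quotient `(ℝ²_≤ ∖ Δ) ∪ {Δ}`, with `d_dim(x,Δ) = x₂−x₁`. -/
def ddimQ : PtD → PtD → ℝ
  | Option.some x, Option.some y => ddim x.1 y.1
  | Option.some x, Option.none => x.1.2 - x.1.1
  | Option.none, Option.some y => y.1.2 - y.1.1
  | Option.none, Option.none => 0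

/-- The topology on the quotient `(ℝ²_≤ ∖ Δ) ∪ {Δ}` generated by the open balls
of a distance function. -/
def topOf (dist : PtD → PtD → ℝ) : TopologicalSpace PtD :=
  TopologicalSpace.generateFrom {B : Set PtD | ∃ x r, B = {y | dist x y < r}}

open Topology

/-! ### Auxiliary lemmas about the overlap of two intervals -/

/-- The overlap (length of the intersection) of two intervals. -/
def ovl (x y : ℝ × ℝ) : ℝ := max (min x.2 y.2 - max x.1 y.1) 0

lemma ovl_nonneg (x y : ℝ × ℝ) : 0 ≤ ovl x y := le_max_right _ _

lemma ovl_le_left (x y : ℝ × ℝ) (hx : x.1 ≤ x.2) : ovl x y ≤ x.2 - x.1 := by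
  apply max_le _ (by linarith)
  have h1 := min_le_left x.2 y.2
  have h2 := le_max_left x.1 y.1
  linarith

lemma ovl_le_right (x y : ℝ × ℝ) (hy : y.1 ≤ y.2) : ovl x y ≤ y.2 - y.1 := by
  apply max_le _ (by linarith)
  have h1 := min_le_right x.2 y.2
  have h2 := le_max_right x.1 y.1
  linarith

lemma ovl_comm (x y : ℝ × ℝ) : ovl x y = ovl y x := by
  simp [ovl, min_comm, max_comm]

lemma min_lin (a b c : ℝ) : min a b + min b c ≤ b + min a c := by
  rcases le_total a c with h | h
  · rw [min_eq_left h]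
    have := min_le_left a b
    have := min_le_left b c
    linarith
  · rw [min_eq_right h]
    have := min_le_right a b
    have := min_le_right b c
    linarith

lemma max_lin (a b c : ℝ) : b + max a c ≤ max a b + max b c := by
  rcases le_total a c with h | h
  · rw [max_eq_right h]
    have := le_max_right a b
    have := le_max_right b c
    linarith
  · rw [max_eq_left h]
    have := le_max_left a b
    have := le_max_left b c
    linarith

/-- Triangle-type inequality for the overlaps through a middle interval `y`. -/
lemma ovl_triangle (x y z : ℝ × ℝ) (hy : y.1 ≤ y.2) :
    ovl x y + ovl y z ≤ (y.2 - y.1) + ovl x z := by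
  unfold ovl
  rcases le_total (min x.2 y.2 - max x.1 y.1) 0 with h | h
  · rw [max_eq_right h]
    have h1 : min y.2 z.2 - max y.1 z.1 ≤ y.2 - y.1 := by
      have := min_le_left y.2 z.2
      have := le_max_left y.1 z.1
      linarith
    have h2 := le_max_right (min x.2 z.2 - max x.1 z.1) 0
    have := max_le h1 (by linarith : (0:ℝ) ≤ y.2 - y.1)
    linarith
  · rcases le_total (min y.2 z.2 - max y.1 z.1) 0 with h' | h'
    · rw [max_eq_right h']
      have h1 : min x.2 y.2 - max x.1 y.1 ≤ y.2 - y.1 := by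
        have := min_le_right x.2 y.2
        have := le_max_right x.1 y.1
        linarith
      have h2 := le_max_right (min x.2 z.2 - max x.1 z.1) 0
      have := max_le h1 (by linarith : (0:ℝ) ≤ y.2 - y.1)
      linarith
    · rw [max_eq_left h, max_eq_left h']
      have h1 := min_lin x.2 y.2 z.2
      have h2 := max_lin x.1 y.1 z.1
      have h3 := le_max_left (min x.2 z.2 - max x.1 z.1) 0
      linarith

lemma ddim_eq' (x y : ℝ × ℝ) :
    ddim x y = (x.2 - x.1) + (y.2 - y.1) - 2 * ovl x y := rfl

lemma drk_eq' (x y : ℝ × ℝ) :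
    drk x y = (x.2 - x.1) ^ 2 / 2 + (y.2 - y.1) ^ 2 / 2 - ovl x y ^ 2 := rfl

lemma ddim_nonneg (x y : ℝ × ℝ) (hx : x.1 ≤ x.2) (hy : y.1 ≤ y.2) : 0 ≤ ddim x y := by
  have := ovl_le_left x y hx
  have := ovl_le_right x y hy
  rw [ddim_eq']; linarith

lemma ddim_triangle (x y z : ℝ × ℝ) (hy : y.1 ≤ y.2) : ddim x z ≤ ddim x y + ddim y z := by
  have := ovl_triangle x y z hy
  simp only [ddim_eq']; linarith

lemma ovl_self (x : ℝ × ℝ) (hx : x.1 ≤ x.2) : ovl x x = x.2 - x.1 := by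
  unfold ovl; simp [max_eq_left (by linarith : (0:ℝ) ≤ x.2 - x.1)]

lemma ddim_self (x : ℝ × ℝ) (hx : x.1 ≤ x.2) : ddim x x = 0 := by
  rw [ddim_eq', ovl_self x hx]; ring

lemma drk_self (x : ℝ × ℝ) (hx : x.1 ≤ x.2) : drk x x = 0 := by
  rw [drk_eq', ovl_self x hx]; ring

lemma sq_ddim_le (x y : ℝ × ℝ) (hx : x.1 ≤ x.2) (hy : y.1 ≤ y.2) :
    ddim x y ^ 2 ≤ 4 * drk x y := by
  have h1 := ovl_le_left x y hx
  have h2 := ovl_le_right x y hy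
  have h3 := ovl_nonneg x y
  rw [ddim_eq', drk_eq']
  nlinarith [sq_nonneg ((x.2 - x.1) - (y.2 - y.1)),
    mul_nonneg h3 (by linarith : (0:ℝ) ≤ (x.2 - x.1 - ovl x y) + (y.2 - y.1 - ovl x y))]

lemma len_bound (y z : ℝ × ℝ) (hy : y.1 ≤ y.2) : z.2 - z.1 ≤ (y.2 - y.1) + ddim y z := by
  have := ovl_le_left y z hy
  rw [ddim_eq']; linarith

lemma drk_bound (x y z : ℝ × ℝ) (hx : x.1 ≤ x.2) (hy : y.1 ≤ y.2) (hz : z.1 ≤ z.2) :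
    drk x z ≤ drk x y + ddim y z * (2 * (x.2 - x.1) + (y.2 - y.1) + (z.2 - z.1)) := by
  have hd : 0 ≤ ddim y z := ddim_nonneg y z hy hz
  have h1 : ovl x z ≤ ovl x y + ddim y z := by
    have k := ovl_triangle x z y hz
    have := ovl_le_left y z hy
    rw [ovl_comm z y] at k
    rw [ddim_eq']; linarith
  have h2 : ovl x y ≤ ovl x z + ddim y z := by
    have k := ovl_triangle x y z hy
    have := ovl_le_right y z hz
    rw [ddim_eq']; linarith
  have h3 : z.2 - z.1 ≤ (y.2 - y.1) + ddim y z := len_bound y z hy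
  have h4 : y.2 - y.1 ≤ (z.2 - z.1) + ddim y z := by
    have := ovl_le_right y z hz
    rw [ddim_eq']; linarith
  have hAy := ovl_le_left x y hx
  have hAz := ovl_le_left x z hx
  have hy0 := ovl_nonneg x y
  have hz0 := ovl_nonneg x z
  rw [drk_eq', drk_eq']
  nlinarith [mul_nonneg hd (by linarith : (0:ℝ) ≤ (z.2 - z.1) + (y.2 - y.1)),
    mul_nonneg hd (by linarith : (0:ℝ) ≤ ovl x y + ovl x z),
    mul_nonneg hd (by linarith : (0:ℝ) ≤ 2 * (x.2 - x.1) - (ovl x y + ovl x z)),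
    sq_nonneg (ddim y z)]

/-! ### Reduction of the quotient distances to the interval formulas -/

/-- Realize each point of the quotient as an interval; the diagonal point
becomes the degenerate interval `(0,0)`. -/
def toI : PtD → ℝ × ℝ
  | Option.some p => p.1
  | Option.none => (0, 0)

lemma toI_le (a : PtD) : (toI a).1 ≤ (toI a).2 := by
  cases a with
  | none => simp [toI]
  | some p => exact le_of_lt p.2

lemma ovl_zero_right (x : ℝ × ℝ) : max (min x.2 (0:ℝ) - max x.1 0) 0 = 0 := by
  have h1 := min_le_right x.2 (0:ℝ)
  have h2 := le_max_right x.1 (0:ℝ)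
  exact max_eq_right (by linarith)

lemma ovl_zero_left (y : ℝ × ℝ) : max (min (0:ℝ) y.2 - max 0 y.1) 0 = 0 := by
  have h1 := min_le_left (0:ℝ) y.2
  have h2 := le_max_left (0:ℝ) y.1
  exact max_eq_right (by linarith)

lemma drkQ_eq (a b : PtD) : drkQ a b = drk (toI a) (toI b) := by
  cases a <;> cases b <;>
    simp [drkQ, drk, toI, ovl_zero_right, ovl_zero_left]

lemma ddimQ_eq (a b : PtD) : ddimQ a b = ddim (toI a) (toI b) := by
  cases a <;> cases b <;>
    simp [ddimQ, ddim, toI, ovl_zero_right, ovl_zero_left]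

/-! ### Main theorem -/

/-- The metrics `d_rk` and `d_dim` induce the same topology on the quotient
`(ℝ²_≤ ∖ Δ) ∪ {Δ}`; i.e., the identity map is a homeomorphism between the two
metric topologies. -/
theorem stmt3 : topOf drkQ = topOf ddimQ := by
  have basic : ∀ (d : PtD → PtD → ℝ) (x : PtD) (r : ℝ), IsOpen[topOf d] {y | d x y < r} :=
    fun d x r => TopologicalSpace.GenerateOpen.basic _ ⟨x, r, rfl⟩
  apply le_antisymm
  · -- every `ddimQ`-ball is open for `topOf drkQ`
    apply le_generateFrom
    rintro s ⟨x, r, rfl⟩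
    letI := topOf drkQ
    rw [isOpen_iff_forall_mem_open]
    intro y hy
    simp only [Set.mem_setOf_eq] at hy
    have hε0 : 0 < r - ddimQ x y := by linarith
    refine ⟨{z | drkQ y z < (r - ddimQ x y) ^ 2 / 4}, ?_, basic drkQ y _, ?_⟩
    · intro z hz
      simp only [Set.mem_setOf_eq] at hz ⊢
      have h1 : ddimQ y z ^ 2 ≤ 4 * drkQ y z := by
        rw [ddimQ_eq, drkQ_eq]
        exact sq_ddim_le _ _ (toI_le y) (toI_le z)
      have h2 : 0 ≤ ddimQ y z := by
        rw [ddimQ_eq]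
        exact ddim_nonneg _ _ (toI_le y) (toI_le z)
      have h3 : ddimQ y z < r - ddimQ x y := by nlinarith
      have h4 : ddimQ x z ≤ ddimQ x y + ddimQ y z := by
        simp only [ddimQ_eq]
        exact ddim_triangle _ _ _ (toI_le y)
      linarith
    · simp only [Set.mem_setOf_eq]
      rw [drkQ_eq, drk_self _ (toI_le y)]
      positivity
  · -- every `drkQ`-ball is open for `topOf ddimQ`
    apply le_generateFrom
    rintro s ⟨x, r, rfl⟩
    letI := topOf ddimQ
    rw [isOpen_iff_forall_mem_open]
    intro y hy
    simp only [Set.mem_setOf_eq] at hy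
    set A : ℝ := (toI x).2 - (toI x).1 with hA
    set B : ℝ := (toI y).2 - (toI y).1 with hB
    have hA0 : 0 ≤ A := by have := toI_le x; simp [hA]; linarith
    have hB0 : 0 ≤ B := by have := toI_le y; simp [hB]; linarith
    have hK : 0 < 2 * A + 2 * B + 1 := by linarith
    have hε0 : 0 < r - drkQ x y := by linarith
    set δ : ℝ := min 1 ((r - drkQ x y) / (2 * A + 2 * B + 1)) with hδ
    have hδ0 : 0 < δ := lt_min one_pos (div_pos hε0 hK)
    refine ⟨{z | ddimQ y z < δ}, ?_, basic ddimQ y δ, ?_⟩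
    · intro z hz
      simp only [Set.mem_setOf_eq] at hz ⊢
      have hd0 : 0 ≤ ddimQ y z := by
        rw [ddimQ_eq]
        exact ddim_nonneg _ _ (toI_le y) (toI_le z)
      have hC : (toI z).2 - (toI z).1 ≤ B + ddimQ y z := by
        rw [ddimQ_eq]
        exact len_bound _ _ (toI_le y)
      have hmain : drkQ x z ≤ drkQ x y +
          ddimQ y z * (2 * A + B + ((toI z).2 - (toI z).1)) := by
        rw [drkQ_eq, drkQ_eq, ddimQ_eq]
        exact drk_bound _ _ _ (toI_le x) (toI_le y) (toI_le z)
      have hδ1 : δ ≤ 1 := min_le_left _ _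
      have hδ2 : δ * (2 * A + 2 * B + 1) ≤ r - drkQ x y := by
        rw [hδ]
        calc min 1 ((r - drkQ x y) / (2 * A + 2 * B + 1)) * (2 * A + 2 * B + 1)
            ≤ ((r - drkQ x y) / (2 * A + 2 * B + 1)) * (2 * A + 2 * B + 1) := by
              exact mul_le_mul_of_nonneg_right (min_le_right _ _) (le_of_lt hK)
          _ = r - drkQ x y := by field_simp
      have step : ddimQ y z * (2 * A + B + ((toI z).2 - (toI z).1)) <
          r - drkQ x y := by
        have e1 : ddimQ y z * (2 * A + B + ((toI z).2 - (toI z).1)) ≤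
            ddimQ y z * (2 * A + 2 * B + ddimQ y z) :=
          mul_le_mul_of_nonneg_left (by linarith) hd0
        have e2 : ddimQ y z * (2 * A + 2 * B + ddimQ y z) ≤
            ddimQ y z * (2 * A + 2 * B + 1) :=
          mul_le_mul_of_nonneg_left (by linarith) hd0
        have e3 : ddimQ y z * (2 * A + 2 * B + 1) < δ * (2 * A + 2 * B + 1) :=
          mul_lt_mul_of_pos_right hz hK
        linarith
      linarith
    · simp only [Set.mem_setOf_eq]
      rw [ddimQ_eq, ddim_self _ (toI_le y)]
      exact hδ0

end
end

section
/- Let α, β, σ, τ, γ, η be finite persistence diagrams and let d be a metric on (ℝ²_≤ ∖ Δ) ∪ {Δ}. Then W₁^d(α + γ, β + σ) + W₁^d(τ + σ, η + γ) ≥ W₁^d(α + τ, β + η), where + denotes multiset sum of diagrams. -/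
open scoped Classical ENNReal
open MeasureTheory Filter

noncomputable section

/-- The cost of the coupling between finite diagrams `α` and `β` determined by
the multiset `m` of matched pairs: matched pairs pay `d` between themselves,
and every unmatched point of `α` or `β` is matched with the diagonal `Δ`. -/
def cost (d : PtD → PtD → ℝ) (α β : Multiset Pt) (m : Multiset (Pt × Pt)) : ℝ :=
  (m.map fun p => d (some p.1) (some p.2)).sum
    + ((α - m.map Prod.fst).map fun x => d (some x) none).sum
    + ((β - m.map Prod.snd).map fun y => d none (some y)).sum

/-- The 1-Wasserstein distance between finite persistence diagrams with ground
metric `d`: the infimum of the costs of all couplings. -/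
def W1fin (d : PtD → PtD → ℝ) (α β : Multiset Pt) : ℝ :=
  sInf {c : ℝ | ∃ m : Multiset (Pt × Pt),
    m.map Prod.fst ≤ α ∧ m.map Prod.snd ≤ β ∧ c = cost d α β m}

/-- The tent function `tent_x(t) = max(0, min(t−x₁, x₂−t))`. -/
def tent (x : Pt) (t : ℝ) : ℝ := max 0 (min (t - x.1.1) (x.1.2 - t))

/-- The persistence landscape `λ_α(k,t)`: the `k`-th largest element of the
multiset `{tent_x(t) : x ∈ α}` (and `0` if `α` has fewer than `k` elements). -/
def landscape (α : Multiset Pt) (k : ℕ) (t : ℝ) : ℝ :=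
  sSup {h : ℝ | 0 < h ∧ k ≤ Multiset.card (α.filter fun x => h ≤ tent x t)}

/-- `‖Λα − Λβ‖₁ = ∑_{k ≥ 1} ∫ |λ_α(k,t) − λ_β(k,t)| dt`. -/
def lambdaDistFin (α β : Multiset Pt) : ℝ :=
  ∑' k : ℕ, ∫ t : ℝ, |landscape α (k + 1) t - landscape β (k + 1) t|


section Aux

variable {d : PtD → PtD → ℝ}

private lemma cost_nonneg (hd0 : ∀ u v : PtD, 0 ≤ d u v) (α β : Multiset Pt)
    (m : Multiset (Pt × Pt)) : 0 ≤ cost d α β m := by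
  unfold cost
  have h1 : 0 ≤ (m.map fun p => d (some p.1) (some p.2)).sum := by
    apply Multiset.sum_nonneg; intro a ha
    obtain ⟨p, _, rfl⟩ := Multiset.mem_map.1 ha; exact hd0 _ _
  have h2 : 0 ≤ ((α - m.map Prod.fst).map fun x => d (some x) none).sum := by
    apply Multiset.sum_nonneg; intro a ha
    obtain ⟨p, _, rfl⟩ := Multiset.mem_map.1 ha; exact hd0 _ _
  have h3 : 0 ≤ ((β - m.map Prod.snd).map fun y => d none (some y)).sum := by
    apply Multiset.sum_nonneg; intro a ha
    obtain ⟨p, _, rfl⟩ := Multiset.mem_map.1 ha; exact hd0 _ _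
  linarith

private def Wset (d : PtD → PtD → ℝ) (α β : Multiset Pt) : Set ℝ :=
  {c : ℝ | ∃ m : Multiset (Pt × Pt),
    m.map Prod.fst ≤ α ∧ m.map Prod.snd ≤ β ∧ c = cost d α β m}

private lemma W1fin_eq (α β : Multiset Pt) : W1fin d α β = sInf (Wset d α β) := rfl

private lemma Wset_nonempty (α β : Multiset Pt) : (Wset d α β).Nonempty :=
  ⟨cost d α β 0, 0, by simp, by simp, rfl⟩

private lemma Wset_bdd (hd0 : ∀ u v : PtD, 0 ≤ d u v) (α β : Multiset Pt) :
    BddBelow (Wset d α β) := by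
  refine ⟨0, ?_⟩
  rintro c ⟨m, -, -, rfl⟩
  exact cost_nonneg hd0 α β m

private lemma W1fin_le_cost (hd0 : ∀ u v : PtD, 0 ≤ d u v) {α β : Multiset Pt}
    {m : Multiset (Pt × Pt)} (hf : m.map Prod.fst ≤ α) (hs : m.map Prod.snd ≤ β) :
    W1fin d α β ≤ cost d α β m :=
  csInf_le (Wset_bdd hd0 α β) ⟨m, hf, hs, rfl⟩

/-- Superadditivity: cost of a disjoint union of couplings. -/
private lemma cost_union (α α' β β' : Multiset Pt) (m m' : Multiset (Pt × Pt))
    (hf : m.map Prod.fst ≤ α) (hs : m.map Prod.snd ≤ β)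
    (hf' : m'.map Prod.fst ≤ α') (hs' : m'.map Prod.snd ≤ β') :
    cost d (α + α') (β + β') (m + m') = cost d α β m + cost d α' β' m' := by
  have hL : (α + α') - (m + m').map Prod.fst
      = (α - m.map Prod.fst) + (α' - m'.map Prod.fst) := by
    ext a
    have h1 := Multiset.le_iff_count.1 hf a
    have h2 := Multiset.le_iff_count.1 hf' a
    simp only [Multiset.count_sub, Multiset.count_add, Multiset.map_add]
    omega
  have hR : (β + β') - (m + m').map Prod.snd
      = (β - m.map Prod.snd) + (β' - m'.map Prod.snd) := by
    ext a
    have h1 := Multiset.le_iff_count.1 hs a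
    have h2 := Multiset.le_iff_count.1 hs' a
    simp only [Multiset.count_sub, Multiset.count_add, Multiset.map_add]
    omega
  unfold cost
  rw [hL, hR]
  simp only [Multiset.map_add, Multiset.sum_add]
  ring

private lemma W1fin_add_le (hd0 : ∀ u v : PtD, 0 ≤ d u v) (α α' β β' : Multiset Pt) :
    W1fin d (α + α') (β + β') ≤ W1fin d α β + W1fin d α' β' := by
  have key : ∀ c ∈ Wset d α β, ∀ c' ∈ Wset d α' β',
      W1fin d (α + α') (β + β') ≤ c + c' := by
    rintro c ⟨m, hf, hs, rfl⟩ c' ⟨m', hf', hs', rfl⟩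
    have h1 : (m + m').map Prod.fst ≤ α + α' := by
      rw [Multiset.map_add]; exact add_le_add hf hf'
    have h2 : (m + m').map Prod.snd ≤ β + β' := by
      rw [Multiset.map_add]; exact add_le_add hs hs'
    calc W1fin d (α + α') (β + β') ≤ cost d (α + α') (β + β') (m + m') :=
          W1fin_le_cost hd0 h1 h2
      _ = cost d α β m + cost d α' β' m' := cost_union α α' β β' m m' hf hs hf' hs'
  have h1 : W1fin d (α + α') (β + β') - W1fin d α' β' ≤ W1fin d α β := by
    rw [W1fin_eq α β]
    apply le_csInf (Wset_nonempty α β)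
    intro c hc
    have h2 : W1fin d (α + α') (β + β') - c ≤ W1fin d α' β' := by
      rw [W1fin_eq α' β']
      apply le_csInf (Wset_nonempty α' β')
      intro c' hc'
      linarith [key c hc c' hc']
    linarith
  linarith

/-- Surgery: given a coupling between `α + {x}` and `β + {x}`, produce a
coupling between `α` and `β` of no larger cost. -/
private lemma step (hd0 : ∀ u v : PtD, 0 ≤ d u v)
    (hdeq : ∀ u v : PtD, d u v = 0 ↔ u = v)
    (hdtri : ∀ u v w : PtD, d u w ≤ d u v + d v w)
    (α β : Multiset Pt) (x : Pt) (m : Multiset (Pt × Pt))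
    (hf : m.map Prod.fst ≤ α + {x}) (hs : m.map Prod.snd ≤ β + {x}) :
    ∃ m' : Multiset (Pt × Pt), m'.map Prod.fst ≤ α ∧ m'.map Prod.snd ≤ β ∧
      cost d α β m' ≤ cost d (α + {x}) (β + {x}) m := by
  by_cases hxx : (x, x) ∈ m
  · -- erase the pair (x,x)
    obtain ⟨m₁, rfl⟩ := Multiset.exists_cons_of_mem hxx
    refine ⟨m₁, ?_, ?_, ?_⟩
    · rw [Multiset.le_iff_count]; intro a
      have h1 := Multiset.le_iff_count.1 hf a
      simp only [Multiset.map_cons, Multiset.count_cons, Multiset.count_add,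
        Multiset.count_singleton] at h1 ⊢
      split_ifs at h1 ⊢ <;> omega
    · rw [Multiset.le_iff_count]; intro a
      have h1 := Multiset.le_iff_count.1 hs a
      simp only [Multiset.map_cons, Multiset.count_cons, Multiset.count_add,
        Multiset.count_singleton] at h1 ⊢
      split_ifs at h1 ⊢ <;> omega
    · have hL : (α + {x}) - ((x, x) ::ₘ m₁).map Prod.fst = α - m₁.map Prod.fst := by
        ext a
        simp only [Multiset.map_cons, Multiset.count_sub, Multiset.count_cons,
          Multiset.count_add, Multiset.count_singleton]
        split_ifs <;> omega
      have hR : (β + {x}) - ((x, x) ::ₘ m₁).map Prod.snd = β - m₁.map Prod.snd := by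
        ext a
        simp only [Multiset.map_cons, Multiset.count_sub, Multiset.count_cons,
          Multiset.count_add, Multiset.count_singleton]
        split_ifs <;> omega
      unfold cost
      rw [hL, hR]
      simp only [Multiset.map_cons, Multiset.sum_cons]
      have : d (some x) (some x) = 0 := (hdeq _ _).2 rfl
      linarith
  · by_cases hfa : m.map Prod.fst ≤ α
    · by_cases hsb : m.map Prod.snd ≤ β
      · -- the trivial case: m already works
        refine ⟨m, hfa, hsb, ?_⟩
        have hL : (α + {x}) - m.map Prod.fst = (α - m.map Prod.fst) + {x} := by
          ext a
          have h1 := Multiset.le_iff_count.1 hfa a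
          simp only [Multiset.count_sub, Multiset.count_add, Multiset.count_singleton]
          split_ifs <;> omega
        have hR : (β + {x}) - m.map Prod.snd = (β - m.map Prod.snd) + {x} := by
          ext a
          have h1 := Multiset.le_iff_count.1 hsb a
          simp only [Multiset.count_sub, Multiset.count_add, Multiset.count_singleton]
          split_ifs <;> omega
        unfold cost
        rw [hL, hR]
        simp only [Multiset.map_add, Multiset.sum_add, Multiset.map_singleton,
          Multiset.sum_singleton]
        have := hd0 (some x) none
        have := hd0 none (some x)
        linarith
      · -- snd deficit only: there is a pair (z, x) in m with z ≠ x
        obtain ⟨a, ha⟩ : ∃ a, β.count a < Multiset.count a (m.map Prod.snd) := by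
          by_contra h
          push_neg at h
          exact hsb (Multiset.le_iff_count.2 fun a => h a)
        have hax : a = x := by
          have h1 := Multiset.le_iff_count.1 hs a
          simp only [Multiset.count_add, Multiset.count_singleton] at h1
          split_ifs at h1 with h2
          · exact h2
          · omega
        subst hax
        have hxmem : a ∈ m.map Prod.snd := by
          rw [← Multiset.count_pos]; omega
        obtain ⟨⟨z, a'⟩, hzm, hza⟩ := Multiset.mem_map.1 hxmem
        simp only at hza
        rw [hza] at hzm
        obtain ⟨m₁, rfl⟩ := Multiset.exists_cons_of_mem hzm
        refine ⟨m₁, ?_, ?_, ?_⟩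
        · exact le_trans (Multiset.map_le_map (Multiset.le_cons_self _ _)) hfa
        · rw [Multiset.le_iff_count]; intro b
          have h1 := Multiset.le_iff_count.1 hs b
          simp only [Multiset.map_cons, Multiset.count_cons, Multiset.count_add,
            Multiset.count_singleton] at h1 ⊢
          split_ifs at h1 ⊢ <;> omega
        · -- left leftover: old = (α − m.fst) + {a}… compute
          have hzx : z ≠ a := fun h => hxx (h ▸ hzm)
          have hL : (α + {a}) - ((z, a) ::ₘ m₁).map Prod.fst
              = (α - ((z, a) ::ₘ m₁).map Prod.fst) + {a} := by
            ext b
            have h1 := Multiset.le_iff_count.1 hfa b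
            simp only [Multiset.map_cons, Multiset.count_cons, Multiset.count_sub,
              Multiset.count_add, Multiset.count_singleton] at h1 ⊢
            split_ifs at h1 ⊢ <;> omega
          have hLnew : α - m₁.map Prod.fst = (α - ((z, a) ::ₘ m₁).map Prod.fst) + {z} := by
            ext b
            have h1 := Multiset.le_iff_count.1 hfa b
            simp only [Multiset.map_cons, Multiset.count_cons, Multiset.count_sub,
              Multiset.count_add, Multiset.count_singleton] at h1 ⊢
            split_ifs at h1 ⊢ <;> omega
          have hR : (β + {a}) - ((z, a) ::ₘ m₁).map Prod.snd = β - m₁.map Prod.snd := by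
            ext b
            simp only [Multiset.map_cons, Multiset.count_cons, Multiset.count_sub,
              Multiset.count_add, Multiset.count_singleton]
            split_ifs <;> omega
          unfold cost
          rw [hL, hLnew, hR]
          simp only [Multiset.map_cons, Multiset.sum_cons, Multiset.map_add,
            Multiset.sum_add, Multiset.map_singleton, Multiset.sum_singleton]
          have htri := hdtri (some z) (some a) none
          clear hsb
          linarith
    · by_cases hsb : m.map Prod.snd ≤ β
      · -- fst deficit only: there is a pair (x, y) in m with y ≠ x
        obtain ⟨a, ha⟩ : ∃ a, α.count a < Multiset.count a (m.map Prod.fst) := by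
          by_contra h
          push_neg at h
          exact hfa (Multiset.le_iff_count.2 fun a => h a)
        have hax : a = x := by
          have h1 := Multiset.le_iff_count.1 hf a
          simp only [Multiset.count_add, Multiset.count_singleton] at h1
          split_ifs at h1 with h2
          · exact h2
          · omega
        subst hax
        have hxmem : a ∈ m.map Prod.fst := by
          rw [← Multiset.count_pos]; omega
        obtain ⟨⟨a', y⟩, hym, hya⟩ := Multiset.mem_map.1 hxmem
        simp only at hya
        rw [hya] at hym
        obtain ⟨m₁, rfl⟩ := Multiset.exists_cons_of_mem hym
        refine ⟨m₁, ?_, ?_, ?_⟩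
        · rw [Multiset.le_iff_count]; intro b
          have h1 := Multiset.le_iff_count.1 hf b
          simp only [Multiset.map_cons, Multiset.count_cons, Multiset.count_add,
            Multiset.count_singleton] at h1 ⊢
          split_ifs at h1 ⊢ <;> omega
        · exact le_trans (Multiset.map_le_map (Multiset.le_cons_self _ _)) hsb
        · have hyx : y ≠ a := fun h => hxx (h ▸ hym)
          have hL : (α + {a}) - ((a, y) ::ₘ m₁).map Prod.fst = α - m₁.map Prod.fst := by
            ext b
            simp only [Multiset.map_cons, Multiset.count_cons, Multiset.count_sub,
              Multiset.count_add, Multiset.count_singleton]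
            split_ifs <;> omega
          have hR : (β + {a}) - ((a, y) ::ₘ m₁).map Prod.snd
              = (β - ((a, y) ::ₘ m₁).map Prod.snd) + {a} := by
            ext b
            have h1 := Multiset.le_iff_count.1 hsb b
            simp only [Multiset.map_cons, Multiset.count_cons, Multiset.count_sub,
              Multiset.count_add, Multiset.count_singleton] at h1 ⊢
            split_ifs at h1 ⊢ <;> omega
          have hRnew : β - m₁.map Prod.snd = (β - ((a, y) ::ₘ m₁).map Prod.snd) + {y} := by
            ext b
            have h1 := Multiset.le_iff_count.1 hsb b
            simp only [Multiset.map_cons, Multiset.count_cons, Multiset.count_sub,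
              Multiset.count_add, Multiset.count_singleton] at h1 ⊢
            split_ifs at h1 ⊢ <;> omega
          unfold cost
          rw [hL, hR, hRnew]
          simp only [Multiset.map_cons, Multiset.sum_cons, Multiset.map_add,
            Multiset.sum_add, Multiset.map_singleton, Multiset.sum_singleton]
          have htri := hdtri none (some a) (some y)
          clear hfa
          linarith
      · -- both deficits: pairs (x, y) and (z, x) in m, recombine into (z, y)
        obtain ⟨a, ha⟩ : ∃ a, α.count a < Multiset.count a (m.map Prod.fst) := by
          by_contra h
          push_neg at h
          exact hfa (Multiset.le_iff_count.2 fun a => h a)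
        have hax : a = x := by
          have h1 := Multiset.le_iff_count.1 hf a
          simp only [Multiset.count_add, Multiset.count_singleton] at h1
          split_ifs at h1 with h2
          · exact h2
          · omega
        subst hax
        obtain ⟨b, hb⟩ : ∃ b, β.count b < Multiset.count b (m.map Prod.snd) := by
          by_contra h
          push_neg at h
          exact hsb (Multiset.le_iff_count.2 fun b => h b)
        have hbx : b = a := by
          have h1 := Multiset.le_iff_count.1 hs b
          simp only [Multiset.count_add, Multiset.count_singleton] at h1
          split_ifs at h1 with h2
          · exact h2
          · omega
        rw [hbx] at hb
        have hxmem : a ∈ m.map Prod.fst := by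
          rw [← Multiset.count_pos]; omega
        obtain ⟨⟨a', y⟩, hym, hya⟩ := Multiset.mem_map.1 hxmem
        simp only at hya
        rw [hya] at hym
        have hyx : y ≠ a := fun h => hxx (h ▸ hym)
        obtain ⟨m₁, rfl⟩ := Multiset.exists_cons_of_mem hym
        have hxmem2 : a ∈ m₁.map Prod.snd := by
          have h2 : Multiset.count a (((a, y) ::ₘ m₁).map Prod.snd)
              = Multiset.count a (m₁.map Prod.snd) := by
            simp only [Multiset.map_cons, Multiset.count_cons]
            split_ifs with h3
            · exact absurd h3.symm hyx
            · omega
          rw [← Multiset.count_pos]; omega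
        obtain ⟨⟨z, a''⟩, hzm, hza⟩ := Multiset.mem_map.1 hxmem2
        simp only at hza
        rw [hza] at hzm
        have hzx : z ≠ a := by
          intro h
          rw [h] at hzm
          exact hxx (Multiset.mem_cons_of_mem hzm)
        obtain ⟨m₂, rfl⟩ := Multiset.exists_cons_of_mem hzm
        refine ⟨(z, y) ::ₘ m₂, ?_, ?_, ?_⟩
        · rw [Multiset.le_iff_count]; intro c
          have h1 := Multiset.le_iff_count.1 hf c
          simp only [Multiset.map_cons, Multiset.count_cons, Multiset.count_add,
            Multiset.count_singleton] at h1 ⊢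
          split_ifs at h1 ⊢ <;> omega
        · rw [Multiset.le_iff_count]; intro c
          have h1 := Multiset.le_iff_count.1 hs c
          simp only [Multiset.map_cons, Multiset.count_cons, Multiset.count_add,
            Multiset.count_singleton] at h1 ⊢
          split_ifs at h1 ⊢ <;> omega
        · have hL : (α + {a}) - ((a, y) ::ₘ (z, a) ::ₘ m₂).map Prod.fst
              = α - ((z, y) ::ₘ m₂).map Prod.fst := by
            ext c
            simp only [Multiset.map_cons, Multiset.count_cons, Multiset.count_sub,
              Multiset.count_add, Multiset.count_singleton]
            split_ifs <;> omega
          have hR : (β + {a}) - ((a, y) ::ₘ (z, a) ::ₘ m₂).map Prod.snd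
              = β - ((z, y) ::ₘ m₂).map Prod.snd := by
            ext c
            simp only [Multiset.map_cons, Multiset.count_cons, Multiset.count_sub,
              Multiset.count_add, Multiset.count_singleton]
            split_ifs <;> omega
          unfold cost
          rw [hL, hR]
          simp only [Multiset.map_cons, Multiset.sum_cons]
          have htri := hdtri (some z) (some a) (some y)
          clear hfa hsb
          linarith

private lemma W1fin_le_cancel_one (hd0 : ∀ u v : PtD, 0 ≤ d u v)
    (hdeq : ∀ u v : PtD, d u v = 0 ↔ u = v)
    (hdtri : ∀ u v w : PtD, d u w ≤ d u v + d v w)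
    (α β : Multiset Pt) (x : Pt) :
    W1fin d α β ≤ W1fin d (α + {x}) (β + {x}) := by
  rw [W1fin_eq (α + {x}) (β + {x})]
  apply le_csInf (Wset_nonempty _ _)
  rintro c ⟨m, hfm, hsm, rfl⟩
  obtain ⟨m', hf', hs', hc⟩ := step hd0 hdeq hdtri α β x m hfm hsm
  exact le_trans (W1fin_le_cost hd0 hf' hs') hc

private lemma W1fin_le_cancel (hd0 : ∀ u v : PtD, 0 ≤ d u v)
    (hdeq : ∀ u v : PtD, d u v = 0 ↔ u = v)
    (hdtri : ∀ u v w : PtD, d u w ≤ d u v + d v w)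
    (α β μ : Multiset Pt) :
    W1fin d α β ≤ W1fin d (α + μ) (β + μ) := by
  induction μ using Multiset.induction_on with
  | empty => simp
  | cons x t ih =>
    have h1 : α + (x ::ₘ t) = (α + t) + {x} := by
      rw [← Multiset.singleton_add, add_comm ({x} : Multiset Pt) t, ← add_assoc]
    have h2 : β + (x ::ₘ t) = (β + t) + {x} := by
      rw [← Multiset.singleton_add, add_comm ({x} : Multiset Pt) t, ← add_assoc]
    rw [h1, h2]
    exact le_trans ih (W1fin_le_cancel_one hd0 hdeq hdtri (α + t) (β + t) x)

end Aux

/-- For finite persistence diagrams `α, β, σ, τ, γ, η` and a metric `d`: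
`W₁^d(α + γ, β + σ) + W₁^d(τ + σ, η + γ) ≥ W₁^d(α + τ, β + η)`. -/
theorem stmt11 (d : PtD → PtD → ℝ)
    (hd0 : ∀ u v : PtD, 0 ≤ d u v)
    (hdsymm : ∀ u v : PtD, d u v = d v u)
    (hdeq : ∀ u v : PtD, d u v = 0 ↔ u = v)
    (hdtri : ∀ u v w : PtD, d u w ≤ d u v + d v w)
    (α β σ τ γ η : Multiset Pt) :
    W1fin d (α + τ) (β + η) ≤ W1fin d (α + γ) (β + σ) + W1fin d (τ + σ) (η + γ) := by
  have h1 : W1fin d (α + τ) (β + η)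
      ≤ W1fin d ((α + τ) + (γ + σ)) ((β + η) + (γ + σ)) :=
    W1fin_le_cancel hd0 hdeq hdtri _ _ _
  have e1 : (α + τ) + (γ + σ) = (α + γ) + (τ + σ) := by
    ext a; simp only [Multiset.count_add]; omega
  have e2 : (β + η) + (γ + σ) = (β + σ) + (η + γ) := by
    ext a; simp only [Multiset.count_add]; omega
  rw [e1, e2] at h1
  exact le_trans h1 (W1fin_add_le hd0 (α + γ) (τ + σ) (β + σ) (η + γ))

end
end
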